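/- arXiv:2107.00321 — 6 statements merged into one kernel-verified Lean document; each statement's English description precedes it below -/
import Mathlib

section
/- Let P be a Poisson algebra over a field K with a set of algebra generators {x_i}. Then the ideal c_P of P generated by all Poisson structure constants c_{ij} = {x_i, x_j} is a Poisson ideal of P, i.e., {P, c_P} ⊆ c_P. -/
/-- A Poisson bracket on a commutative `K`-algebra `P`. -/
def IsPoissonBracket (K : Type*) {P : Type*} [Field K] [CommRing P] [Algebra K P]
    (b : P →ₗ[K] P →ₗ[K] P) : Prop :=
  (∀ a, b a a = 0) ∧
  (∀ a x y, b a (b x y) = b (b a x) y + b x (b a y)) ∧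
  (∀ a x y, b a (x * y) = b a x * y + x * b a y)

/-- If `P` is generated as a `K`-algebra by elements `x i`, then the ideal generated by
all Poisson structure constants `{x i, x j}` is a Poisson ideal of `P`. -/
theorem structure_constants_ideal_is_poisson (K P ι : Type*) [Field K] [CommRing P]
    [Algebra K P] (b : P →ₗ[K] P →ₗ[K] P) (hb : IsPoissonBracket K b)
    (x : ι → P) (hx : Algebra.adjoin K (Set.range x) = ⊤) :
    ∀ p y : P,
      y ∈ Ideal.span (Set.range fun ij : ι × ι => b (x ij.1) (x ij.2)) →
      b p y ∈ Ideal.span (Set.range fun ij : ι × ι => b (x ij.1) (x ij.2)) := by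
  obtain ⟨halt, hjac, hleib⟩ := hb
  set J := Ideal.span (Set.range fun ij : ι × ι => b (x ij.1) (x ij.2)) with hJ
  have hanti : ∀ u v, b u v = - b v u := by
    intro u v
    have h := halt (u + v)
    simp only [map_add, LinearMap.add_apply, halt, zero_add, add_zero] at h
    linear_combination h
  have hone : ∀ a, b a 1 = 0 := by
    intro a
    have h := hleib a 1 1
    simp only [mul_one, one_mul] at h
    exact right_eq_add.mp h
  have halg : ∀ (r : K) (v : P), b (algebraMap K P r) v = 0 := by
    intro r v
    have : (algebraMap K P r) = r • (1 : P) := by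
      rw [Algebra.smul_def, mul_one]
    rw [this, map_smul, LinearMap.smul_apply, hanti 1 v, hone, neg_zero, smul_zero]
  have hgen : ∀ i j, b (x i) (x j) ∈ J := by
    intro i j
    exact Ideal.subset_span ⟨(i, j), rfl⟩
  have hA : ∀ (j : ι) (q : P), b q (x j) ∈ J := by
    intro j q
    have hq : q ∈ Algebra.adjoin K (Set.range x) := hx.symm ▸ Algebra.mem_top
    induction hq using Algebra.adjoin_induction with
    | mem a ha =>
      obtain ⟨i, rfl⟩ := ha
      exact hgen i j
    | algebraMap r => rw [halg]; exact J.zero_mem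
    | add u v hu hv ihu ihv =>
      rw [map_add, LinearMap.add_apply]; exact J.add_mem ihu ihv
    | mul u v hu hv ihu ihv =>
      have : b (u * v) (x j) = b u (x j) * v + u * b v (x j) := by
        rw [hanti (u * v) (x j), hleib, hanti (x j) u, hanti (x j) v]; ring
      rw [this]
      exact J.add_mem (J.mul_mem_right v ihu) (J.mul_mem_left u ihv)
  have hB : ∀ (p : P) (i j : ι), b p (b (x i) (x j)) ∈ J := by
    intro p i j
    rw [hjac p (x i) (x j)]
    refine J.add_mem (hA j _) ?_
    rw [hanti (x i) (b p (x j))]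
    exact J.neg_mem (hA i _)
  intro p y hy
  induction hy using Submodule.span_induction with
  | mem z hz =>
    obtain ⟨⟨i, j⟩, rfl⟩ := hz
    exact hB p i j
  | zero => rw [map_zero]; exact J.zero_mem
  | add u v hu hv ihu ihv =>
    rw [map_add]; exact J.add_mem ihu ihv
  | smul r z hz ihz =>
    rw [smul_eq_mul, hleib]
    exact J.add_mem (J.mul_mem_left _ hz) (J.mul_mem_left _ ihz)
end

section
/- Let P be a Poisson algebra and S a multiplicative subset of P. Then the ideal a = ass(S) = {a ∈ P | sa = 0 for some s ∈ S} is a Poisson ideal of P. -/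
/-- For a multiplicative subset `S` of a Poisson algebra `P`, the ideal
`ass(S) = {a | s a = 0 for some s ∈ S}` is a Poisson ideal of `P`. -/
theorem assassinator_is_poisson_ideal (K P : Type*) [Field K] [CommRing P] [Algebra K P]
    (b : P →ₗ[K] P →ₗ[K] P) (hb : IsPoissonBracket K b) (S : Submonoid P) :
    ∀ p a : P, (∃ s ∈ S, s * a = 0) → ∃ s ∈ S, s * b p a = 0 := by
  rintro p a ⟨s, hs, h⟩
  refine ⟨s * s, S.mul_mem hs hs, ?_⟩
  have key : b p (s * a) = b p s * a + s * b p a := hb.2.2 p s a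
  rw [h, map_zero] at key
  have h2 : s * (b p s * a + s * b p a) = 0 := by rw [← key, mul_zero]
  have h3 : b p s * (s * a) = 0 := by rw [h, mul_zero]
  calc s * s * b p a = s * (b p s * a + s * b p a) - b p s * (s * a) := by ring
    _ = 0 := by rw [h2, h3, sub_zero]
end

section
/- Let P₂ = K[x,y] be the polynomial Poisson algebra in two variables with bracket determined by {y, x} = 1 (the symplectic plane). Then the Poisson enveloping algebra U(P₂), i.e., the K-algebra generated by x, y, δ_x, δ_y subject to xy = yx, [δ_x, δ_y] = 0, [δ_y, x] = 1, [δ_y, y] = 0, [δ_x, y] = −1, [δ_x, x] = 0, is isomorphic to the second Weyl algebra A₂ (the algebra of differential operators on K[x,y], equivalently A₁ ⊗ A₁). -/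
/-- Defining relations of the Poisson enveloping algebra `U(P₂)` of the symplectic
plane `P₂ = K[x,y]`, `{y,x} = 1`.  Generators: `0 = x`, `1 = y`, `2 = δ_x`, `3 = δ_y`. -/
inductive PoissonEnvRel (K : Type*) [Field K] :
    FreeAlgebra K (Fin 4) → FreeAlgebra K (Fin 4) → Prop
  | comm_xy : PoissonEnvRel K (FreeAlgebra.ι K 0 * FreeAlgebra.ι K 1)
      (FreeAlgebra.ι K 1 * FreeAlgebra.ι K 0)
  | comm_dxdy : PoissonEnvRel K (FreeAlgebra.ι K 2 * FreeAlgebra.ι K 3)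
      (FreeAlgebra.ι K 3 * FreeAlgebra.ι K 2)
  | dy_x : PoissonEnvRel K
      (FreeAlgebra.ι K 3 * FreeAlgebra.ι K 0 - FreeAlgebra.ι K 0 * FreeAlgebra.ι K 3) 1
  | dy_y : PoissonEnvRel K (FreeAlgebra.ι K 3 * FreeAlgebra.ι K 1)
      (FreeAlgebra.ι K 1 * FreeAlgebra.ι K 3)
  | dx_y : PoissonEnvRel K
      (FreeAlgebra.ι K 2 * FreeAlgebra.ι K 1 - FreeAlgebra.ι K 1 * FreeAlgebra.ι K 2) (-1)
  | dx_x : PoissonEnvRel K (FreeAlgebra.ι K 2 * FreeAlgebra.ι K 0)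
      (FreeAlgebra.ι K 0 * FreeAlgebra.ι K 2)

/-- Defining relations of the second Weyl algebra `A₂`: generators `p i = inl i`,
`q j = inr j` (`i, j : Fin 2`), with `[p_i, q_j] = δ_{ij}`, `[p_i,p_j] = [q_i,q_j] = 0`. -/
inductive WeylRel (K : Type*) [Field K] :
    FreeAlgebra K (Fin 2 ⊕ Fin 2) → FreeAlgebra K (Fin 2 ⊕ Fin 2) → Prop
  | pq_same (i : Fin 2) : WeylRel K
      (FreeAlgebra.ι K (.inl i) * FreeAlgebra.ι K (.inr i)
        - FreeAlgebra.ι K (.inr i) * FreeAlgebra.ι K (.inl i)) 1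
  | pq_ne (i j : Fin 2) (h : i ≠ j) : WeylRel K
      (FreeAlgebra.ι K (.inl i) * FreeAlgebra.ι K (.inr j))
      (FreeAlgebra.ι K (.inr j) * FreeAlgebra.ι K (.inl i))
  | pp (i j : Fin 2) : WeylRel K
      (FreeAlgebra.ι K (.inl i) * FreeAlgebra.ι K (.inl j))
      (FreeAlgebra.ι K (.inl j) * FreeAlgebra.ι K (.inl i))
  | qq (i j : Fin 2) : WeylRel K
      (FreeAlgebra.ι K (.inr i) * FreeAlgebra.ι K (.inr j))
      (FreeAlgebra.ι K (.inr j) * FreeAlgebra.ι K (.inr i))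


section NegHelpers

private lemma aux_neg_comm {R : Type*} [Ring R] {a b : R} (h : a * b = b * a) :
    -a * b = b * -a := by rw [neg_mul, mul_neg, h]

private lemma aux_neg_comm' {R : Type*} [Ring R] {a b : R} (h : a * b = b * a) :
    a * -b = -b * a := by rw [neg_mul, mul_neg, h]

private lemma aux_neg_one {R : Type*} [Ring R] {a b : R} (h : a * b - b * a = 1) :
    -a * b - b * -a = -1 := by
  rw [neg_mul, mul_neg, sub_neg_eq_add, neg_add_eq_sub, ← neg_sub (a * b) (b * a), h]

private lemma aux_neg_one' {R : Type*} [Ring R] {a b : R} (h : a * b - b * a = -1) :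
    -a * b - b * -a = 1 := by
  rw [neg_mul, mul_neg, sub_neg_eq_add, neg_add_eq_sub, ← neg_sub (a * b) (b * a), h, neg_neg]

end NegHelpers

section Aux

variable (K : Type*) [Field K]

/-- Images of the Poisson generators in the Weyl algebra:
`x ↦ q₀`, `y ↦ q₁`, `δ_x ↦ -p₁`, `δ_y ↦ p₀`. -/
noncomputable def toWeylAux : Fin 4 → RingQuot (WeylRel K) :=
  ![RingQuot.mkAlgHom K (WeylRel K) (FreeAlgebra.ι K (.inr 0)),
    RingQuot.mkAlgHom K (WeylRel K) (FreeAlgebra.ι K (.inr 1)),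
    -(RingQuot.mkAlgHom K (WeylRel K) (FreeAlgebra.ι K (.inl 1))),
    RingQuot.mkAlgHom K (WeylRel K) (FreeAlgebra.ι K (.inl 0))]

/-- Images of the Weyl generators in the Poisson enveloping algebra:
`p₀ ↦ δ_y`, `p₁ ↦ -δ_x`, `q₀ ↦ x`, `q₁ ↦ y`. -/
noncomputable def toPoissonAux : Fin 2 ⊕ Fin 2 → RingQuot (PoissonEnvRel K)
  | .inl 0 => RingQuot.mkAlgHom K (PoissonEnvRel K) (FreeAlgebra.ι K 3)
  | .inl 1 => -(RingQuot.mkAlgHom K (PoissonEnvRel K) (FreeAlgebra.ι K 2))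
  | .inr 0 => RingQuot.mkAlgHom K (PoissonEnvRel K) (FreeAlgebra.ι K 0)
  | .inr 1 => RingQuot.mkAlgHom K (PoissonEnvRel K) (FreeAlgebra.ι K 1)

noncomputable def toWeyl : RingQuot (PoissonEnvRel K) →ₐ[K] RingQuot (WeylRel K) :=
  RingQuot.liftAlgHom K ⟨FreeAlgebra.lift K (toWeylAux K), by
    intro a b h
    induction h with
    | comm_xy =>
        simp only [map_mul, FreeAlgebra.lift_ι_apply, toWeylAux, Matrix.cons_val_zero, Matrix.cons_val_one,
          Matrix.cons_val_two, Matrix.cons_val_three, Matrix.head_cons, Matrix.tail_cons]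
        rw [← map_mul, ← map_mul, RingQuot.mkAlgHom_rel K (WeylRel.qq 0 1)]
    | comm_dxdy =>
        simp only [map_mul, FreeAlgebra.lift_ι_apply, toWeylAux, Matrix.cons_val_zero, Matrix.cons_val_one,
          Matrix.cons_val_two, Matrix.cons_val_three, Matrix.head_cons, Matrix.tail_cons]
        exact aux_neg_comm (by
          rw [← map_mul, ← map_mul, RingQuot.mkAlgHom_rel K (WeylRel.pp 1 0)])
    | dy_x =>
        simp only [map_sub, map_mul, map_one, FreeAlgebra.lift_ι_apply, toWeylAux, Matrix.cons_val_zero, Matrix.cons_val_one,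
          Matrix.cons_val_two, Matrix.cons_val_three, Matrix.head_cons, Matrix.tail_cons]
        show RingQuot.mkAlgHom K (WeylRel K) (FreeAlgebra.ι K (.inl 0)) *
            RingQuot.mkAlgHom K (WeylRel K) (FreeAlgebra.ι K (.inr 0)) -
          RingQuot.mkAlgHom K (WeylRel K) (FreeAlgebra.ι K (.inr 0)) *
            RingQuot.mkAlgHom K (WeylRel K) (FreeAlgebra.ι K (.inl 0)) = 1
        rw [← map_mul, ← map_mul, ← map_sub, RingQuot.mkAlgHom_rel K (WeylRel.pq_same 0),
          map_one]
    | dy_y =>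
        simp only [map_mul, FreeAlgebra.lift_ι_apply, toWeylAux, Matrix.cons_val_zero, Matrix.cons_val_one,
          Matrix.cons_val_two, Matrix.cons_val_three, Matrix.head_cons, Matrix.tail_cons]
        show RingQuot.mkAlgHom K (WeylRel K) (FreeAlgebra.ι K (.inl 0)) *
            RingQuot.mkAlgHom K (WeylRel K) (FreeAlgebra.ι K (.inr 1)) =
          RingQuot.mkAlgHom K (WeylRel K) (FreeAlgebra.ι K (.inr 1)) *
            RingQuot.mkAlgHom K (WeylRel K) (FreeAlgebra.ι K (.inl 0))
        rw [← map_mul, ← map_mul,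
          RingQuot.mkAlgHom_rel K (WeylRel.pq_ne 0 1 (by decide))]
    | dx_y =>
        simp only [map_sub, map_mul, map_one, map_neg, FreeAlgebra.lift_ι_apply, toWeylAux, Matrix.cons_val_zero, Matrix.cons_val_one,
          Matrix.cons_val_two, Matrix.cons_val_three, Matrix.head_cons, Matrix.tail_cons]
        exact aux_neg_one (by
          rw [← map_mul, ← map_mul, ← map_sub, RingQuot.mkAlgHom_rel K (WeylRel.pq_same 1),
            map_one])
    | dx_x =>
        simp only [map_mul, FreeAlgebra.lift_ι_apply, toWeylAux, Matrix.cons_val_zero, Matrix.cons_val_one,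
          Matrix.cons_val_two, Matrix.cons_val_three, Matrix.head_cons, Matrix.tail_cons]
        exact aux_neg_comm (by
          rw [← map_mul, ← map_mul, RingQuot.mkAlgHom_rel K (WeylRel.pq_ne 1 0 (by decide))])⟩

noncomputable def toPoisson : RingQuot (WeylRel K) →ₐ[K] RingQuot (PoissonEnvRel K) :=
  RingQuot.liftAlgHom K ⟨FreeAlgebra.lift K (toPoissonAux K), by
    intro a b h
    induction h with
    | pq_same i =>
        fin_cases i
        · simp only [map_sub, map_mul, map_one, FreeAlgebra.lift_ι_apply, toPoissonAux]
          rw [← map_mul, ← map_mul, ← map_sub, RingQuot.mkAlgHom_rel K PoissonEnvRel.dy_x,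
            map_one]
        · simp only [map_sub, map_mul, map_one, FreeAlgebra.lift_ι_apply, toPoissonAux]
          exact aux_neg_one' (by
            rw [← map_mul, ← map_mul, ← map_sub, RingQuot.mkAlgHom_rel K PoissonEnvRel.dx_y]
            simp)
    | pq_ne i j hij =>
        fin_cases i <;> fin_cases j <;> first
        | exact absurd rfl hij
        | · simp only [map_mul, FreeAlgebra.lift_ι_apply, toPoissonAux]
            first
            | rw [← map_mul, ← map_mul, RingQuot.mkAlgHom_rel K PoissonEnvRel.dy_y]
            | exact aux_neg_comm (by
                rw [← map_mul, ← map_mul, RingQuot.mkAlgHom_rel K PoissonEnvRel.dx_x])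
    | pp i j =>
        fin_cases i <;> fin_cases j <;>
          simp only [map_mul, FreeAlgebra.lift_ι_apply, toPoissonAux] <;>
          first
          | rfl
          | exact aux_neg_comm' (by
              rw [← map_mul, ← map_mul, RingQuot.mkAlgHom_rel K PoissonEnvRel.comm_dxdy])
          | exact aux_neg_comm (by
              rw [← map_mul, ← map_mul, ← RingQuot.mkAlgHom_rel K PoissonEnvRel.comm_dxdy])
    | qq i j =>
        fin_cases i <;> fin_cases j <;>
          simp only [map_mul, FreeAlgebra.lift_ι_apply, toPoissonAux] <;>
          first
          | rfl
          | rw [← map_mul, ← map_mul, RingQuot.mkAlgHom_rel K PoissonEnvRel.comm_xy]⟩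

end Aux

/-- The Poisson enveloping algebra of the symplectic plane `P₂ = K[x,y]` with
`{y,x} = 1` is isomorphic to the second Weyl algebra `A₂`. -/
theorem poissonEnveloping_symplectic_plane_iso_weyl (K : Type*) [Field K] :
    Nonempty (RingQuot (PoissonEnvRel K) ≃ₐ[K] RingQuot (WeylRel K)) := by
  refine ⟨AlgEquiv.ofAlgHom (toWeyl K) (toPoisson K) ?_ ?_⟩
  · apply RingQuot.ringQuot_ext'
    apply FreeAlgebra.hom_ext
    funext i
    match i with
    | .inl 0 | .inl 1 | .inr 0 | .inr 1 =>
      simp [toWeyl, toPoisson, toWeylAux, toPoissonAux, RingQuot.liftAlgHom_mkAlgHom_apply]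
  · apply RingQuot.ringQuot_ext'
    apply FreeAlgebra.hom_ext
    funext i
    fin_cases i <;>
      simp [toWeyl, toPoisson, toWeylAux, toPoissonAux, RingQuot.liftAlgHom_mkAlgHom_apply]
end

section
/- Let P be a Poisson algebra over a field K and let Ω_P be the module of Kähler differentials of the commutative algebra P, viewed inside the Poisson enveloping algebra U(P) via a db ↦ a δ_b. Then Ω_P is closed under the commutator bracket of U(P), and explicitly for all a₁, a₂, b₁, b₂ ∈ P: [a₁ da₂, b₁ db₂] = a₁{a₂, b₁} db₂ − b₁{b₂, a₁} da₂ + a₁b₁ d{a₂, b₂}. In particular, Ω_P is a Lie algebra over K with this bracket. -/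
open Finsupp KaehlerDifferential

section aux
variable {K P : Type*} [Field K] [CommRing P] [Algebra K P]
variable (b : P →ₗ[K] P →ₗ[K] P)

/-- inner map in `b₁` for fixed `a₁ a₂ b₂`. -/
noncomputable def coreInner (a₁ a₂ b₂ : P) : P →ₗ[K] KaehlerDifferential K P where
  toFun b₁ := (a₁ * b a₂ b₁) • KaehlerDifferential.D K P b₂
      - (b₁ * b b₂ a₁) • KaehlerDifferential.D K P a₂
      + (a₁ * b₁) • KaehlerDifferential.D K P (b a₂ b₂)
  map_add' x y := by
    simp only [map_add, mul_add, add_mul, add_smul]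
    abel
  map_smul' k x := by
    simp only [map_smul, mul_smul_comm, smul_mul_assoc, RingHom.id_apply]
    match_scalars <;> simp [Algebra.smul_def, mul_assoc]

noncomputable def coreMap (a₁ a₂ : P) : (P →₀ P) →ₗ[K] KaehlerDifferential K P :=
  Finsupp.lsum K fun b₂ => coreInner b a₁ a₂ b₂

lemma coreMap_single (a₁ a₂ b₁ b₂ : P) :
    coreMap b a₁ a₂ (Finsupp.single b₂ b₁) =
      (a₁ * b a₂ b₁) • KaehlerDifferential.D K P b₂
      - (b₁ * b b₂ a₁) • KaehlerDifferential.D K P a₂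
      + (a₁ * b₁) • KaehlerDifferential.D K P (b a₂ b₂) := by
  simp [coreMap, coreInner]

noncomputable def Bmap : (P →₀ P) →ₗ[K] (P →₀ P) →ₗ[K] KaehlerDifferential K P :=
  Finsupp.lsum K fun a₂ =>
    { toFun := fun a₁ => coreMap b a₁ a₂
      map_add' := fun x y => by
        refine Finsupp.lhom_ext fun b₂ b₁ => ?_
        simp only [coreMap_single, map_add, mul_add, add_mul, add_smul, LinearMap.add_apply]
        abel
      map_smul' := fun k x => by
        refine Finsupp.lhom_ext fun b₂ b₁ => ?_
        simp only [coreMap_single, map_smul, mul_smul_comm, smul_mul_assoc, RingHom.id_apply,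
          LinearMap.smul_apply]
        match_scalars <;> simp [Algebra.smul_def, mul_assoc] }

lemma Bmap_single (a₁ a₂ b₁ b₂ : P) :
    Bmap b (Finsupp.single a₂ a₁) (Finsupp.single b₂ b₁) =
      (a₁ * b a₂ b₁) • KaehlerDifferential.D K P b₂
      - (b₁ * b b₂ a₁) • KaehlerDifferential.D K P a₂
      + (a₁ * b₁) • KaehlerDifferential.D K P (b a₂ b₂) := by
  simp [Bmap, coreMap_single]

end aux

section main
variable {K P : Type*} [Field K] [CommRing P] [Algebra K P]
variable (b : P →ₗ[K] P →ₗ[K] P)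

section facts
variable (halt : ∀ a : P, b a a = 0)
variable (hleib : ∀ a x y : P, b a (x * y) = b a x * y + x * b a y)

include halt in
lemma hsk (p q : P) : b p q = - b q p := by
  have h := halt (p + q)
  simp only [map_add, LinearMap.add_apply, halt] at h
  linear_combination h

include halt hleib in
lemma hleibL (p q r : P) : b (p * q) r = p * b q r + q * b p r := by
  rw [hsk b halt (p*q) r, hleib, hsk b halt r p, hsk b halt r q]; ring

include hleib in
lemma hone (p : P) : b p 1 = 0 := by
  have h := hleib p 1 1
  simp at h
  exact h

include halt hleib in
lemma honeL (p : P) : b 1 p = 0 := by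
  rw [hsk b halt, hone b hleib, neg_zero]

include halt hleib in
lemma halg (r : K) (p : P) : b (algebraMap K P r) p = 0 := by
  rw [Algebra.algebraMap_eq_smul_one, map_smul, LinearMap.smul_apply,
    honeL b halt hleib, smul_zero]
end facts

section vanish
variable (halt : ∀ a : P, b a a = 0)
variable (hleib : ∀ a x y : P, b a (x * y) = b a x * y + x * b a y)
include halt hleib

lemma Bmap_ker_left : ∀ s ∈ (KaehlerDifferential.kerTotal K P).restrictScalars K,
    Bmap b s = 0 := by
  intro s hs
  rw [Submodule.restrictScalars_mem, KaehlerDifferential.kerTotal] at hs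
  have key : ∀ p : P, Bmap b (p • s) = 0 := by
    induction hs using Submodule.span_induction with
    | mem x hx =>
      intro p
      refine Finsupp.lhom_ext fun y c => ?_
      obtain ((⟨⟨u, v⟩, rfl⟩ | ⟨⟨u, v⟩, rfl⟩) | ⟨r, rfl⟩) := hx
      · simp only [smul_add, smul_sub, Finsupp.smul_single, smul_eq_mul, mul_one,
          map_add, map_sub, LinearMap.add_apply, LinearMap.sub_apply, LinearMap.zero_apply,
          Bmap_single, map_add, add_mul, mul_add, add_smul]
        abel
      · simp only [smul_add, smul_sub, Finsupp.smul_single, smul_eq_mul, mul_one,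
          map_add, map_sub, LinearMap.add_apply, LinearMap.sub_apply, LinearMap.zero_apply,
          Bmap_single, hleibL b halt hleib, hleib, Derivation.leibniz, map_add]
        match_scalars
        all_goals first
          | ring1
          | linear_combination (-(p*c)) * hsk b halt y u
          | linear_combination (-(p*c)) * hsk b halt y v
          | linear_combination (-(p*c)) * hsk b halt y u + (-(p*c)) * hsk b halt y v
      · simp only [Finsupp.smul_single, smul_eq_mul, mul_one, Bmap_single,
          halg b halt hleib, Derivation.map_algebraMap, LinearMap.zero_apply, map_zero,
          mul_zero, zero_mul, zero_smul, smul_zero, zero_sub, add_zero, zero_add, neg_zero]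
    | zero => intro p; simp
    | add x y _ _ hx hy => intro p; simp only [smul_add, map_add, hx, hy, add_zero]
    | smul q x _ hx => intro p; rw [smul_smul]; exact hx _
  simpa using key 1

include halt in
lemma Bmap_skew (x y : P →₀ P) : Bmap b x y = - Bmap b y x := by
  have h : Bmap b + (Bmap (K := K) b).flip = 0 := by
    refine Finsupp.lhom_ext fun x a => ?_
    refine Finsupp.lhom_ext fun y c => ?_
    simp only [LinearMap.add_apply, LinearMap.flip_apply, LinearMap.zero_apply, Bmap_single]
    rw [hsk b halt y x]
    simp only [map_neg, smul_neg]
    match_scalars <;> ring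
  have h2 := DFunLike.congr_fun (DFunLike.congr_fun h x) y
  simp only [LinearMap.add_apply, LinearMap.flip_apply, LinearMap.zero_apply] at h2
  exact eq_neg_of_add_eq_zero_left h2


end vanish
section build
variable (halt : ∀ a : P, b a a = 0)
variable (hleib : ∀ a x y : P, b a (x * y) = b a x * y + x * b a y)

include halt hleib in
lemma Bmap_ker_left' :
    (KaehlerDifferential.kerTotal K P).restrictScalars K ≤ LinearMap.ker (Bmap b) :=
  fun s hs => Bmap_ker_left b halt hleib s hs

noncomputable def C1 (halt : ∀ a : P, b a a = 0)
    (hleib : ∀ a x y : P, b a (x * y) = b a x * y + x * b a y) : ((P →₀ P) ⧸ (KaehlerDifferential.kerTotal K P).restrictScalars K)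
    →ₗ[K] (P →₀ P) →ₗ[K] KaehlerDifferential K P :=
  Submodule.liftQ _ (Bmap b) (Bmap_ker_left' b halt hleib)

include halt hleib in
lemma C1_ker : (KaehlerDifferential.kerTotal K P).restrictScalars K ≤
    LinearMap.ker (C1 b halt hleib).flip := by
  intro s hs
  rw [LinearMap.mem_ker]
  refine LinearMap.ext fun q => ?_
  obtain ⟨x, rfl⟩ := Submodule.Quotient.mk_surjective _ q
  show (C1 b halt hleib) (Submodule.Quotient.mk x) s = 0
  rw [C1, Submodule.liftQ_apply, Bmap_skew b halt hleib x s]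
  have h0 : Bmap b s = 0 := Bmap_ker_left b halt hleib s hs
  rw [h0]
  simp

noncomputable def Cq (halt : ∀ a : P, b a a = 0)
    (hleib : ∀ a x y : P, b a (x * y) = b a x * y + x * b a y) : ((P →₀ P) ⧸ (KaehlerDifferential.kerTotal K P).restrictScalars K)
    →ₗ[K] ((P →₀ P) ⧸ (KaehlerDifferential.kerTotal K P).restrictScalars K)
    →ₗ[K] KaehlerDifferential K P :=
  (Submodule.liftQ _ (C1 b halt hleib).flip (C1_ker b halt hleib)).flip

include halt hleib in
lemma Cq_mk (x y : P →₀ P) :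
    Cq b halt hleib (Submodule.Quotient.mk x) (Submodule.Quotient.mk y) = Bmap b x y := by
  simp [Cq, C1]

end build

lemma total_ker : (KaehlerDifferential.kerTotal K P).restrictScalars K ≤
    LinearMap.ker ((Finsupp.linearCombination P (KaehlerDifferential.D K P)).restrictScalars K) := by
  intro s hs
  rw [LinearMap.mem_ker, LinearMap.restrictScalars_apply]
  have hmem : s ∈ KaehlerDifferential.kerTotal K P := hs
  rw [← KaehlerDifferential.kerTotal_eq] at hmem
  exact hmem

noncomputable def fQ : ((P →₀ P) ⧸ (KaehlerDifferential.kerTotal K P).restrictScalars K)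
    →ₗ[K] KaehlerDifferential K P :=
  Submodule.liftQ _ _ (total_ker (K := K) (P := P))

lemma fQ_bij : Function.Bijective (fQ (K := K) (P := P)) := by
  constructor
  · rw [← LinearMap.ker_eq_bot, eq_bot_iff]
    intro q hq
    obtain ⟨x, rfl⟩ := Submodule.Quotient.mk_surjective _ q
    have hx : Finsupp.linearCombination P (KaehlerDifferential.D K P) x = 0 := hq
    rw [← LinearMap.mem_ker, KaehlerDifferential.kerTotal_eq] at hx
    simpa [Submodule.Quotient.mk_eq_zero] using hx
  · intro w
    obtain ⟨x, hx⟩ := KaehlerDifferential.linearCombination_surjective K P w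
    exact ⟨Submodule.Quotient.mk x, hx⟩

noncomputable def psiE : ((P →₀ P) ⧸ (KaehlerDifferential.kerTotal K P).restrictScalars K)
    ≃ₗ[K] KaehlerDifferential K P :=
  LinearEquiv.ofBijective _ (fQ_bij (K := K) (P := P))

lemma psiE_mk_single (x a : P) :
    psiE (Submodule.Quotient.mk (Finsupp.single x a)) = a • KaehlerDifferential.D K P x := by
  show fQ (Submodule.Quotient.mk (Finsupp.single x a)) = _
  rw [fQ, Submodule.liftQ_apply]
  simp

lemma psiE_symm_smul_D (a x : P) :
    (psiE (K := K) (P := P)).symm (a • KaehlerDifferential.D K P x) =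
      Submodule.Quotient.mk (Finsupp.single x a) := by
  rw [LinearEquiv.symm_apply_eq, psiE_mk_single]

section L
variable (halt : ∀ a : P, b a a = 0)
variable (hleib : ∀ a x y : P, b a (x * y) = b a x * y + x * b a y)

noncomputable def Lmap (halt : ∀ a : P, b a a = 0)
    (hleib : ∀ a x y : P, b a (x * y) = b a x * y + x * b a y) : KaehlerDifferential K P →ₗ[K] KaehlerDifferential K P
    →ₗ[K] KaehlerDifferential K P :=
  (Cq b halt hleib).compl₁₂ ((psiE (K := K) (P := P)).symm : _ →ₗ[K] _)
    ((psiE (K := K) (P := P)).symm : _ →ₗ[K] _)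

include halt hleib in
lemma Lmap_gen (a x c y : P) :
    Lmap b halt hleib (a • KaehlerDifferential.D K P x) (c • KaehlerDifferential.D K P y) =
      (a * b x c) • KaehlerDifferential.D K P y
      - (c * b y a) • KaehlerDifferential.D K P x
      + (a * c) • KaehlerDifferential.D K P (b x y) := by
  rw [Lmap, LinearMap.compl₁₂_apply, LinearEquiv.coe_coe, psiE_symm_smul_D, psiE_symm_smul_D,
    Cq_mk, Bmap_single]

end L

lemma mem_span_gen (w : KaehlerDifferential K P) :
    w ∈ Submodule.span K (Set.range fun p : P × P =>
      p.1 • KaehlerDifferential.D K P p.2) := by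
  have h1 : w ∈ Submodule.span P (Set.range (KaehlerDifferential.D K P)) := by
    rw [KaehlerDifferential.span_range_derivation]; trivial
  induction h1 using Submodule.span_induction with
  | mem v hv =>
    obtain ⟨x, rfl⟩ := hv
    exact Submodule.subset_span ⟨(1, x), by simp⟩
  | zero => exact Submodule.zero_mem _
  | add u v _ _ hu hv => exact Submodule.add_mem _ hu hv
  | smul p v hv hv' =>
    clear hv
    induction hv' using Submodule.span_induction with
    | mem u hu =>
      obtain ⟨⟨a, x⟩, rfl⟩ := hu
      rw [smul_smul]
      exact Submodule.subset_span ⟨(p * a, x), rfl⟩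
    | zero => rw [smul_zero]; exact Submodule.zero_mem _
    | add u v _ _ hu hv => rw [smul_add]; exact Submodule.add_mem _ hu hv
    | smul k u _ hu => rw [smul_comm]; exact Submodule.smul_mem _ _ hu

end main


set_option maxHeartbeats 1000000 in
/-- The module `Ω_P` of Kähler differentials of a Poisson algebra `P` is a Lie algebra
over `K` via the bracket
`[a₁ da₂, b₁ db₂] = a₁{a₂,b₁} db₂ − b₁{b₂,a₁} da₂ + a₁b₁ d{a₂,b₂}`
(arising as the commutator in the Poisson enveloping algebra `U(P)`). -/
theorem kaehler_lie_bracket (K P : Type*) [Field K] [CommRing P] [Algebra K P]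
    (b : P →ₗ[K] P →ₗ[K] P) (hb : IsPoissonBracket K b) :
    ∃ L : KaehlerDifferential K P →ₗ[K] KaehlerDifferential K P →ₗ[K]
        KaehlerDifferential K P,
      (∀ w, L w w = 0) ∧
      (∀ u v w, L u (L v w) = L (L u v) w + L v (L u w)) ∧
      (∀ a₁ a₂ b₁ b₂ : P,
        L (a₁ • KaehlerDifferential.D K P a₂) (b₁ • KaehlerDifferential.D K P b₂) =
          (a₁ * b a₂ b₁) • KaehlerDifferential.D K P b₂
            - (b₁ * b b₂ a₁) • KaehlerDifferential.D K P a₂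
            + (a₁ * b₁) • KaehlerDifferential.D K P (b a₂ b₂)) := by
  obtain ⟨halt, hjac, hleib⟩ := hb
  set L := Lmap b halt hleib with hL
  have key : ∀ u v, L u v + L v u = 0 := by
    intro u v
    induction mem_span_gen u using Submodule.span_induction with
    | mem s hs =>
      induction mem_span_gen v using Submodule.span_induction with
      | mem t ht =>
        obtain ⟨⟨a, x⟩, rfl⟩ := hs
        obtain ⟨⟨c, y⟩, rfl⟩ := ht
        rw [hL, Lmap_gen, Lmap_gen, hsk b halt y x]
        simp only [map_neg, smul_neg]
        match_scalars <;> ring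
      | zero => simp
      | add t₁ t₂ _ _ h1 h2 =>
        simp only [map_add, LinearMap.add_apply]
        rw [add_add_add_comm, h1, h2, add_zero]
      | smul k t _ h =>
        simp only [map_smul, LinearMap.smul_apply]
        have h2 : k • ((L s) t + (L t) s) = (0 : KaehlerDifferential K P) := by
          rw [h, smul_zero]
        rw [← h2]
        match_scalars <;> simp [Algebra.smul_def, mul_assoc]
    | zero => simp
    | add s₁ s₂ _ _ h1 h2 =>
      simp only [map_add, LinearMap.add_apply]
      rw [add_add_add_comm, h1, h2, add_zero]
    | smul k s _ h =>
      simp only [map_smul, LinearMap.smul_apply]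
      have h2 : k • ((L s) v + (L v) s) = (0 : KaehlerDifferential K P) := by
        rw [h, smul_zero]
      rw [← h2]
      match_scalars <;> simp [Algebra.smul_def, mul_assoc]
  refine ⟨L, ?_, ?_, fun a₁ a₂ b₁ b₂ => Lmap_gen b halt hleib a₁ a₂ b₁ b₂⟩
  · intro w
    induction mem_span_gen w using Submodule.span_induction with
    | mem s hs =>
      obtain ⟨⟨a, x⟩, rfl⟩ := hs
      rw [hL, Lmap_gen]
      simp [halt]
    | zero => simp
    | add u v _ _ hu hv =>
      simp only [map_add, LinearMap.add_apply, hu, hv, add_zero, zero_add]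
      rw [add_comm]
      exact key u v
    | smul k u _ hu =>
      simp only [map_smul, LinearMap.smul_apply, hu, smul_zero]
  · intro u v w
    induction mem_span_gen u using Submodule.span_induction with
    | mem s hs =>
      induction mem_span_gen v using Submodule.span_induction with
      | mem t ht =>
        induction mem_span_gen w using Submodule.span_induction with
        | mem r hr =>
          obtain ⟨⟨a, x⟩, rfl⟩ := hs
          obtain ⟨⟨c, y⟩, rfl⟩ := ht
          obtain ⟨⟨e, z⟩, rfl⟩ := hr
          rw [hL]
          simp only [Lmap_gen, map_sub, map_add, LinearMap.sub_apply, LinearMap.add_apply]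
          rw [hjac x y z, hsk b halt y x]
          simp only [hleib, map_add, map_neg, smul_neg]
          match_scalars
          all_goals first
            | ring1
            | linear_combination (a*c) * hjac x y e
            | linear_combination (c*e) * hjac y z a
            | linear_combination (-(a*e)) * hjac x z c
        | zero => simp
        | add w₁ w₂ _ _ h1 h2 =>
          simp only [map_add]
          rw [h1, h2]
          abel
        | smul k w' _ h =>
          simp only [map_smul]
          rw [h]
          match_scalars <;> simp [Algebra.smul_def, mul_assoc]
      | zero => simp
      | add v₁ v₂ _ _ h1 h2 =>
        simp only [map_add, LinearMap.add_apply]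
        rw [h1, h2]
        abel
      | smul k v' _ h =>
        simp only [map_smul, LinearMap.smul_apply, map_smul]
        rw [h]
        match_scalars <;> simp [Algebra.smul_def, mul_assoc]
    | zero => simp
    | add u₁ u₂ _ _ h1 h2 =>
      simp only [map_add, LinearMap.add_apply]
      rw [h1, h2]
      abel
    | smul k u' _ h =>
      simp only [map_smul, LinearMap.smul_apply]
      rw [h]
      match_scalars <;> simp [Algebra.smul_def, mul_assoc]
end

section
/- Let P be a Poisson polynomial algebra P_n = K[x₁,…,x_n] with c_{ij} = {x_i,x_j}. Define in the semidirect-product setting the elements t_i and the bracket [t_i, t_j] = ∑_k (∂c_{ij}/∂x_k) t_k, [t_i, p] = {x_i, p} for p ∈ P_n. Then G' = P_n ⊕ ⨁_{i=1}^n P_n t_i is a Lie algebra over K under these brackets extended by [p t_i, q t_j] = p{x_i,q}t_j − q{x_j,p}t_i + pq ∑_k (∂c_{ij}/∂x_k) t_k and [p t_i, q] = p{x_i, q}, with P_n an abelian Lie ideal. -/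
open MvPolynomial

/-- The bracket on `G' = P_n ⊕ ⨁ P_n t_i` (an element `(p, q)` represents
`p + ∑_i q_i t_i`) determined by `[t_i, t_j] = ∑_k (∂c_{ij}/∂x_k) t_k`,
`[t_i, p] = {x_i, p}`, extended by
`[p t_i, q t_j] = p{x_i,q} t_j − q{x_j,p} t_i + pq ∑_k (∂c_{ij}/∂x_k) t_k` and
`[p t_i, q] = p {x_i, q}`. -/
noncomputable def gBracket (K : Type*) [Field K] (n : ℕ)
    (b : MvPolynomial (Fin n) K →ₗ[K] MvPolynomial (Fin n) K →ₗ[K] MvPolynomial (Fin n) K) :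
    (MvPolynomial (Fin n) K × (Fin n → MvPolynomial (Fin n) K)) →
    (MvPolynomial (Fin n) K × (Fin n → MvPolynomial (Fin n) K)) →
    MvPolynomial (Fin n) K × (Fin n → MvPolynomial (Fin n) K) :=
  fun m m' =>
    (∑ i, m.2 i * b (X i) m'.1 - ∑ j, m'.2 j * b (X j) m.1,
     fun k =>
       ∑ i, m.2 i * b (X i) (m'.2 k) - ∑ j, m'.2 j * b (X j) (m.2 k)
         + ∑ i, ∑ j, m.2 i * m'.2 j * pderiv k (b (X i) (X j)))

namespace GBracketAux

variable {K : Type*} [Field K] {n : ℕ}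

theorem pderiv_comm' (k m : Fin n) (f : MvPolynomial (Fin n) K) :
    pderiv k (pderiv m f) = pderiv m (pderiv k f) := by
  induction f using MvPolynomial.induction_on with
  | C a => simp
  | add p q hp hq => simp [hp, hq]
  | mul_X p i hp =>
    simp [pderiv_mul, pderiv_X, Pi.single_apply, hp, apply_ite (pderiv k),
      apply_ite (pderiv m), mul_ite, mul_one, mul_zero]
    ring

theorem deriv_expand (L : MvPolynomial (Fin n) K →ₗ[K] MvPolynomial (Fin n) K)
    (hL : ∀ x y, L (x * y) = L x * y + x * L y) (p : MvPolynomial (Fin n) K) :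
    L p = ∑ m, pderiv m p * L (X m) := by
  induction p using MvPolynomial.induction_on with
  | C a =>
    have h1 : L 1 = 0 := by
      have := hL 1 1; simpa using this.symm
    have : L (C a) = 0 := by
      rw [show (C a : MvPolynomial (Fin n) K) = a • 1 from by simp [Algebra.smul_def],
        map_smul, h1, smul_zero]
    simp [this]
  | add p q hp hq => simp [hp, hq, Finset.sum_add_distrib, add_mul]
  | mul_X p i hp =>
    rw [hL, hp]
    simp only [pderiv_mul, pderiv_X, Pi.single_apply, add_mul, Finset.sum_add_distrib,
      ite_mul, one_mul, zero_mul, mul_ite, mul_zero, Finset.sum_ite_eq, Finset.sum_ite_eq',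
      Finset.mem_univ, if_true, Finset.sum_mul, mul_one]
    congr 1
    exact Finset.sum_congr rfl fun m _ => by ring

theorem sum_single_mul (p : MvPolynomial (Fin n) K) (i : Fin n)
    (g : Fin n → MvPolynomial (Fin n) K) :
    ∑ i', (Pi.single i p : Fin n → MvPolynomial (Fin n) K) i' * g i' = p * g i := by
  simp [Pi.single_apply, ite_mul, Finset.sum_ite_eq']

theorem sum_ite_const {α : Type*} [Fintype α] (c : Prop) [Decidable c]
    (f : α → MvPolynomial (Fin n) K) :
    ∑ x, (if c then f x else 0) = if c then ∑ x, f x else 0 := by split <;> simp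

variable (b : MvPolynomial (Fin n) K →ₗ[K] MvPolynomial (Fin n) K →ₗ[K] MvPolynomial (Fin n) K)

theorem brAddL (x y z : MvPolynomial (Fin n) K × (Fin n → MvPolynomial (Fin n) K)) :
    gBracket K n b (x + y) z = gBracket K n b x z + gBracket K n b y z := by
  refine Prod.ext ?_ (funext fun k => ?_) <;>
  · simp only [gBracket, Prod.fst_add, Prod.snd_add, Pi.add_apply, map_add,
      LinearMap.add_apply, add_mul, mul_add, Finset.sum_add_distrib]
    ring

theorem brAddR (x y z : MvPolynomial (Fin n) K × (Fin n → MvPolynomial (Fin n) K)) :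
    gBracket K n b x (y + z) = gBracket K n b x y + gBracket K n b x z := by
  refine Prod.ext ?_ (funext fun k => ?_) <;>
  · simp only [gBracket, Prod.fst_add, Prod.snd_add, Pi.add_apply, map_add,
      LinearMap.add_apply, add_mul, mul_add, Finset.sum_add_distrib]
    ring

theorem brSmulL (c : K) (x y : MvPolynomial (Fin n) K × (Fin n → MvPolynomial (Fin n) K)) :
    gBracket K n b (c • x) y = c • gBracket K n b x y := by
  refine Prod.ext ?_ (funext fun k => ?_) <;>
  · simp only [gBracket, Prod.smul_fst, Prod.smul_snd, Pi.smul_apply, map_smul,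
      LinearMap.smul_apply, smul_mul_assoc, mul_smul_comm, Finset.smul_sum, smul_sub, smul_add]

theorem brSmulR (c : K) (x y : MvPolynomial (Fin n) K × (Fin n → MvPolynomial (Fin n) K)) :
    gBracket K n b x (c • y) = c • gBracket K n b x y := by
  refine Prod.ext ?_ (funext fun k => ?_) <;>
  · simp only [gBracket, Prod.smul_fst, Prod.smul_snd, Pi.smul_apply, map_smul,
      LinearMap.smul_apply, smul_mul_assoc, mul_smul_comm, Finset.smul_sum, smul_sub, smul_add]

theorem brZl (z : MvPolynomial (Fin n) K × (Fin n → MvPolynomial (Fin n) K)) :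
    gBracket K n b 0 z = 0 := by
  refine Prod.ext ?_ (funext fun k => ?_) <;> simp [gBracket]

theorem brZr (z : MvPolynomial (Fin n) K × (Fin n → MvPolynomial (Fin n) K)) :
    gBracket K n b z 0 = 0 := by
  refine Prod.ext ?_ (funext fun k => ?_) <;> simp [gBracket]

theorem brPP (p q : MvPolynomial (Fin n) K) :
    gBracket K n b (p, 0) (q, 0) = 0 := by
  refine Prod.ext ?_ (funext fun k => ?_) <;> simp [gBracket]

theorem brmP (m : MvPolynomial (Fin n) K × (Fin n → MvPolynomial (Fin n) K))
    (q : MvPolynomial (Fin n) K) :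
    gBracket K n b m (q, 0) = (∑ i, m.2 i * b (X i) q, 0) := by
  refine Prod.ext ?_ (funext fun k => ?_) <;> simp [gBracket]

theorem brPm (q : MvPolynomial (Fin n) K)
    (m : MvPolynomial (Fin n) K × (Fin n → MvPolynomial (Fin n) K)) :
    gBracket K n b (q, 0) m = (-∑ j, m.2 j * b (X j) q, 0) := by
  refine Prod.ext ?_ (funext fun k => ?_) <;> simp [gBracket]

theorem brTT (i j : Fin n) (p q : MvPolynomial (Fin n) K) :
    gBracket K n b (0, Pi.single i p) (0, Pi.single j q) =
      (0, fun k => (if k = j then p * b (X i) q else 0) - (if k = i then q * b (X j) p else 0)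
          + p * q * pderiv k (b (X i) (X j))) := by
  refine Prod.ext ?_ (funext fun k => ?_)
  · simp [gBracket]
  · simp [gBracket, Pi.single_apply, ite_mul, mul_ite, apply_ite (b (X _)),
      Finset.sum_ite_eq', mul_assoc]

def jac (x y z : MvPolynomial (Fin n) K × (Fin n → MvPolynomial (Fin n) K)) : Prop :=
  gBracket K n b x (gBracket K n b y z) =
    gBracket K n b (gBracket K n b x y) z + gBracket K n b y (gBracket K n b x z)

theorem jac_add1 {x x' y z} (h : jac b x y z) (h' : jac b x' y z) : jac b (x + x') y z := by
  unfold jac at *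
  simp only [brAddL, brAddR, h, h']
  abel

theorem jac_add2 {x y y' z} (h : jac b x y z) (h' : jac b x y' z) : jac b x (y + y') z := by
  unfold jac at *
  simp only [brAddL, brAddR, h, h']
  abel

theorem jac_add3 {x y z z'} (h : jac b x y z) (h' : jac b x y z') : jac b x y (z + z') := by
  unfold jac at *
  simp only [brAddL, brAddR, h, h']
  abel

theorem jac_zero1 (y z) : jac b 0 y z := by unfold jac; simp only [brZl, brZr]; simp
theorem jac_zero2 (x z) : jac b x 0 z := by unfold jac; simp only [brZl, brZr]; simp
theorem jac_zero3 (x y) : jac b x y 0 := by unfold jac; simp only [brZl, brZr]; simp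

theorem jac_sum1 {s : Finset (Fin n)} {F : Fin n → _} {y z}
    (h : ∀ a ∈ s, jac b (F a) y z) : jac b (∑ a ∈ s, F a) y z := by
  classical
  induction s using Finset.induction_on with
  | empty => simpa using jac_zero1 b y z
  | insert _ _ hns ih =>
    rw [Finset.sum_insert hns]
    exact jac_add1 b (h _ (Finset.mem_insert_self _ _))
      (ih fun a ha => h a (Finset.mem_insert_of_mem ha))

theorem jac_sum2 {s : Finset (Fin n)} {F : Fin n → _} {x z}
    (h : ∀ a ∈ s, jac b x (F a) z) : jac b x (∑ a ∈ s, F a) z := by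
  classical
  induction s using Finset.induction_on with
  | empty => simpa using jac_zero2 b x z
  | insert _ _ hns ih =>
    rw [Finset.sum_insert hns]
    exact jac_add2 b (h _ (Finset.mem_insert_self _ _))
      (ih fun a ha => h a (Finset.mem_insert_of_mem ha))

theorem jac_sum3 {s : Finset (Fin n)} {F : Fin n → _} {x y}
    (h : ∀ a ∈ s, jac b x y (F a)) : jac b x y (∑ a ∈ s, F a) := by
  classical
  induction s using Finset.induction_on with
  | empty => simpa using jac_zero3 b x y
  | insert _ _ hns ih =>
    rw [Finset.sum_insert hns]
    exact jac_add3 b (h _ (Finset.mem_insert_self _ _))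
      (ih fun a ha => h a (Finset.mem_insert_of_mem ha))

theorem decomp (x : MvPolynomial (Fin n) K × (Fin n → MvPolynomial (Fin n) K)) :
    x = (x.1, 0) + ∑ i, ((0 : MvPolynomial (Fin n) K), Pi.single i (x.2 i)) := by
  have hs : (∑ i, ((0 : MvPolynomial (Fin n) K), Pi.single i (x.2 i))) =
      ((0 : MvPolynomial (Fin n) K), x.2) := by
    refine Prod.ext ?_ ?_
    · rw [Prod.fst_sum]; simp
    · rw [Prod.snd_sum]; exact Finset.univ_sum_single x.2
  rw [hs, Prod.mk_add_mk, add_zero, zero_add]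

/-- Generators: `gen none p = (p, 0)` and `gen (some i) p = (0, p·tᵢ)`. -/
noncomputable def gen (o : Option (Fin n)) (p : MvPolynomial (Fin n) K) :
    MvPolynomial (Fin n) K × (Fin n → MvPolynomial (Fin n) K) :=
  match o with
  | none => (p, 0)
  | some i => (0, Pi.single i p)

variable {b}
variable (hb : IsPoissonBracket K b)
include hb

theorem gskew (x y : MvPolynomial (Fin n) K) : b x y = - b y x := by
  have h := hb.1 (x + y)
  simp only [map_add, LinearMap.add_apply, hb.1, zero_add, add_zero] at h
  linear_combination h

theorem expand2 (p q : MvPolynomial (Fin n) K) : b p q = ∑ m, pderiv m q * b p (X m) :=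
  deriv_expand (b p) (hb.2.2 p) q

theorem leib1 (x y z : MvPolynomial (Fin n) K) : b (x * y) z = b x z * y + x * b y z := by
  rw [gskew hb (x*y) z, hb.2.2, gskew hb z x, gskew hb z y]; ring

theorem expand1 (p q : MvPolynomial (Fin n) K) : b p q = ∑ m, pderiv m p * b (X m) q := by
  have h := deriv_expand (b.flip q) (fun x y => by
    simp only [LinearMap.flip_apply]; exact leib1 hb x y q) p
  simpa using h

theorem jacB (i j : Fin n) (y : MvPolynomial (Fin n) K) :
    b (X i) (b (X j) y) =
      (∑ m, pderiv m (b (X i) (X j)) * b (X m) y) + b (X j) (b (X i) y) := by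
  rw [hb.2.1 (X i) (X j) y, ← expand1 hb]

theorem Jprime (i j l : Fin n) :
    ∑ m, pderiv m (b (X j) (X l)) * b (X i) (X m) =
      (∑ m, pderiv m (b (X i) (X j)) * b (X m) (X l)) +
        ∑ m, pderiv m (b (X i) (X l)) * b (X j) (X m) := by
  have h := jacB hb i j (X l)
  rw [expand2 hb (X i) (b (X j) (X l)), expand2 hb (X j) (b (X i) (X l))] at h
  exact h

theorem star (i j l k : Fin n) :
    b (X i) (pderiv k (b (X j) (X l)))
      + ∑ m, pderiv m (b (X j) (X l)) * pderiv k (b (X i) (X m)) =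
    ((∑ m, pderiv m (b (X i) (X j)) * pderiv k (b (X m) (X l)))
        - b (X l) (pderiv k (b (X i) (X j))))
      + (b (X j) (pderiv k (b (X i) (X l)))
        + ∑ m, pderiv m (b (X i) (X l)) * pderiv k (b (X j) (X m))) := by
  have h := congrArg (pderiv k) (Jprime hb i j l)
  simp only [map_add, map_sum, pderiv_mul, Finset.sum_add_distrib] at h
  rw [expand2 hb (X i) (pderiv k (b (X j) (X l))),
      expand2 hb (X j) (pderiv k (b (X i) (X l))),
      expand2 hb (X l) (pderiv k (b (X i) (X j)))]
  have e1 : ∑ m, pderiv m (pderiv k (b (X j) (X l))) * b (X i) (X m)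
      = ∑ m, pderiv k (pderiv m (b (X j) (X l))) * b (X i) (X m) :=
    Finset.sum_congr rfl fun m _ => by rw [pderiv_comm']
  have e2 : ∑ m, pderiv m (pderiv k (b (X i) (X j))) * b (X l) (X m)
      = -∑ m, pderiv k (pderiv m (b (X i) (X j))) * b (X m) (X l) := by
    rw [← Finset.sum_neg_distrib]
    exact Finset.sum_congr rfl fun m _ => by
      rw [pderiv_comm', gskew hb (X l) (X m)]; ring
  have e3 : ∑ m, pderiv m (pderiv k (b (X i) (X l))) * b (X j) (X m)
      = ∑ m, pderiv k (pderiv m (b (X i) (X l))) * b (X j) (X m) :=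
    Finset.sum_congr rfl fun m _ => by rw [pderiv_comm']
  rw [e1, e2, e3]
  linear_combination h

theorem brSelf (m : MvPolynomial (Fin n) K × (Fin n → MvPolynomial (Fin n) K)) :
    gBracket K n b m m = 0 := by
  refine Prod.ext ?_ (funext fun k => ?_)
  · simp [gBracket]
  · simp only [gBracket, sub_self, zero_add, Prod.snd_zero, Pi.zero_apply]
    rw [← Finset.sum_product']
    refine Finset.sum_involution (fun p _ => (p.2, p.1)) (fun p _ => ?_) (fun p _ hp => ?_)
      (fun p _ => Finset.mem_univ _) (fun p _ => rfl)
    · rw [gskew hb (X p.1) (X p.2)]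
      simp
      ring
    · intro h
      apply hp
      have h2 : p.2 = p.1 := congrArg Prod.fst h
      rw [h2, hb.1, map_zero, mul_zero]

set_option maxHeartbeats 4000000 in
theorem jac_gen (o1 o2 o3 : Option (Fin n)) (p q r : MvPolynomial (Fin n) K) :
    jac b (gen o1 p) (gen o2 q) (gen o3 r) := by
  have hleib := hb.2.2
  have hjac := jacB hb
  have hsk := gskew hb
  have hstar := star hb
  unfold jac
  match o1, o2, o3 with
  | none, none, none => simp only [gen, brPP, brZl, brZr]; simp
  | some i, none, none => simp only [gen, brPP, brmP, brPm, brZl, brZr]; simp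
  | none, some j, none => simp only [gen, brPP, brmP, brPm, brZl, brZr]; simp
  | none, none, some l => simp only [gen, brPP, brmP, brPm, brZl, brZr]; simp
  | some i, some j, none =>
    simp only [gen, brTT, brPm, brmP]
    refine Prod.ext ?_ (funext fun k => ?_)
    · simp only [sum_single_mul, Prod.fst_add, Prod.snd_add, Pi.add_apply]
      simp only [Finset.sum_sub_distrib, Finset.sum_add_distrib, sub_mul, add_mul, ite_mul,
        zero_mul, Finset.sum_ite_eq', Finset.mem_univ, if_true]
      have hs : ∑ x, p * q * pderiv x (b (X i) (X j)) * b (X x) r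
          = p * q * ∑ m, pderiv m (b (X i) (X j)) * b (X m) r := by
        rw [Finset.mul_sum]; exact Finset.sum_congr rfl fun m _ => by ring
      rw [hs, hleib (X i) q (b (X j) r), hleib (X j) p (b (X i) r), hjac i j r]
      ring
    · simp [sum_single_mul]
  | some i, none, some l =>
    simp only [gen, brTT, brPm, brmP]
    refine Prod.ext ?_ (funext fun k => ?_)
    · simp only [sum_single_mul, Prod.fst_add, Prod.snd_add, Pi.add_apply, map_neg, mul_neg,
        neg_mul, Finset.sum_neg_distrib]
      simp only [sum_single_mul, Finset.sum_sub_distrib, Finset.sum_add_distrib, sub_mul,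
        add_mul, ite_mul, zero_mul, Finset.sum_ite_eq', Finset.mem_univ, if_true]
      have hs : ∑ x, p * r * pderiv x (b (X i) (X l)) * b (X x) q
          = p * r * ∑ m, pderiv m (b (X i) (X l)) * b (X m) q := by
        rw [Finset.mul_sum]; exact Finset.sum_congr rfl fun m _ => by ring
      rw [hs, hleib (X i) r (b (X l) q), hleib (X l) p (b (X i) q), hjac i l q]
      ring
    · simp [sum_single_mul]
  | none, some j, some l =>
    simp only [gen, brTT, brPm, brmP]
    refine Prod.ext ?_ (funext fun k => ?_)
    · simp only [sum_single_mul, Prod.fst_add, Prod.snd_add, Pi.add_apply, map_neg, mul_neg,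
        neg_mul, Finset.sum_neg_distrib]
      simp only [sum_single_mul, Finset.sum_sub_distrib, Finset.sum_add_distrib, sub_mul,
        add_mul, ite_mul, zero_mul, Finset.sum_ite_eq', Finset.mem_univ, if_true]
      have hs : ∑ x, q * r * pderiv x (b (X j) (X l)) * b (X x) p
          = q * r * ∑ m, pderiv m (b (X j) (X l)) * b (X m) p := by
        rw [Finset.mul_sum]; exact Finset.sum_congr rfl fun m _ => by ring
      rw [hs, hleib (X l) q (b (X j) p), hleib (X j) r (b (X l) p), hjac j l p]
      ring
    · simp [sum_single_mul]
  | some i, some j, some l =>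
    simp only [gen, brTT]
    refine Prod.ext ?_ (funext fun k => ?_)
    · simp [gBracket]
    · simp only [gBracket, Prod.fst_add, Prod.snd_add, Pi.add_apply, sum_single_mul]
      simp only [Pi.single_apply, ite_mul, mul_ite, zero_mul, mul_zero, map_sub, map_add,
        apply_ite (b (X _)), map_zero, mul_sub, sub_mul, add_mul, mul_add,
        Finset.sum_sub_distrib, Finset.sum_add_distrib, Finset.sum_ite_eq', Finset.sum_ite_eq,
        Finset.mem_univ, if_true, sum_ite_const]
      simp only [hleib]
      have h1 : ∑ x, q * r * pderiv x (b (X j) (X l)) * b (X x) p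
          = q * r * ∑ m, pderiv m (b (X j) (X l)) * b (X m) p := by
        rw [Finset.mul_sum]; exact Finset.sum_congr rfl fun m _ => by ring
      have h2 : ∑ x, p * (q * r * pderiv x (b (X j) (X l))) * pderiv k (b (X i) (X x))
          = p * q * r * ∑ m, pderiv m (b (X j) (X l)) * pderiv k (b (X i) (X m)) := by
        rw [Finset.mul_sum]; exact Finset.sum_congr rfl fun m _ => by ring
      have h3 : ∑ x, p * q * pderiv x (b (X i) (X j)) * b (X x) r
          = p * q * ∑ m, pderiv m (b (X i) (X j)) * b (X m) r := by
        rw [Finset.mul_sum]; exact Finset.sum_congr rfl fun m _ => by ring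
      have h4 : ∑ x, p * q * pderiv x (b (X i) (X j)) * r * pderiv k (b (X x) (X l))
          = p * q * r * ∑ m, pderiv m (b (X i) (X j)) * pderiv k (b (X m) (X l)) := by
        rw [Finset.mul_sum]; exact Finset.sum_congr rfl fun m _ => by ring
      have h5 : ∑ x, p * r * pderiv x (b (X i) (X l)) * b (X x) q
          = p * r * ∑ m, pderiv m (b (X i) (X l)) * b (X m) q := by
        rw [Finset.mul_sum]; exact Finset.sum_congr rfl fun m _ => by ring
      have h6 : ∑ x, q * (p * r * pderiv x (b (X i) (X l))) * pderiv k (b (X j) (X x))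
          = p * q * r * ∑ m, pderiv m (b (X i) (X l)) * pderiv k (b (X j) (X m)) := by
        rw [Finset.mul_sum]; exact Finset.sum_congr rfl fun m _ => by ring
      rw [h1, h2, h3, h4, h5, h6, show b (X j) (X i) = -b (X i) (X j) from hsk (X j) (X i)]
      simp only [map_neg, mul_neg, neg_mul]
      simp only [hjac i j r, hjac i l q, hjac j l p]
      split_ifs <;> linear_combination (p * q * r) * hstar i j l k

theorem jac_all (x y z : MvPolynomial (Fin n) K × (Fin n → MvPolynomial (Fin n) K)) :
    jac b x y z := by
  have hgen := jac_gen hb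
  have h3 : ∀ o1 o2 p q z, jac b (gen o1 p) (gen o2 q) z := by
    intro o1 o2 p q z
    rw [decomp z]
    refine jac_add3 b (hgen o1 o2 none p q z.1) (jac_sum3 b fun a _ => ?_)
    exact hgen o1 o2 (some a) p q (z.2 a)
  have h2 : ∀ o1 p y z, jac b (gen o1 p) y z := by
    intro o1 p y z
    rw [decomp y]
    refine jac_add2 b (h3 o1 none p y.1 z) (jac_sum2 b fun a _ => ?_)
    exact h3 o1 (some a) p (y.2 a) z
  rw [decomp x]
  refine jac_add1 b (h2 none x.1 y z) (jac_sum1 b fun a _ => ?_)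
  exact h2 (some a) (x.2 a) y z

end GBracketAux

open GBracketAux in
/-- For a Poisson polynomial algebra `P_n = K[x₁,…,x_n]`, the free module
`G' = P_n ⊕ ⨁_{i=1}^n P_n t_i` is a Lie algebra over `K` under `gBracket`, with `P_n`
an abelian Lie ideal. -/
theorem gBracket_lie_algebra (K : Type*) [Field K] (n : ℕ)
    (b : MvPolynomial (Fin n) K →ₗ[K] MvPolynomial (Fin n) K →ₗ[K] MvPolynomial (Fin n) K)
    (hb : IsPoissonBracket K b) :
    (∀ x y z, gBracket K n b (x + y) z = gBracket K n b x z + gBracket K n b y z) ∧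
    (∀ x y z, gBracket K n b x (y + z) = gBracket K n b x y + gBracket K n b x z) ∧
    (∀ (c : K) x y, gBracket K n b (c • x) y = c • gBracket K n b x y) ∧
    (∀ (c : K) x y, gBracket K n b x (c • y) = c • gBracket K n b x y) ∧
    (∀ m, gBracket K n b m m = 0) ∧
    (∀ x y z, gBracket K n b x (gBracket K n b y z) =
      gBracket K n b (gBracket K n b x y) z + gBracket K n b y (gBracket K n b x z)) ∧
    (∀ p p' : MvPolynomial (Fin n) K, gBracket K n b (p, 0) (p', 0) = 0) ∧
    (∀ m (p : MvPolynomial (Fin n) K), (gBracket K n b m (p, 0)).2 = 0) := by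
  refine ⟨brAddL b, brAddR b, brSmulL b, brSmulR b, brSelf hb, jac_all hb,
    brPP b, fun m p => ?_⟩
  rw [brmP b]
end

section
/- Let P be a Poisson algebra over an arbitrary field K such that the natural map π_P : U(P) → End_K(P) (sending p ∈ P to multiplication by p and δ_q to pad_q = {q,·}) has image P D(P), the algebra of Poisson differential operators on P. Then P D(P) is a simple ring if and only if P is Poisson simple, i.e., 0 and P are the only ideals I of P with {P, I} ⊆ I. -/
/-- The algebra `PD(P)` of Poisson differential operators on a Poisson algebra `P`:
the subalgebra of `End_K(P)` generated by the multiplication operators together with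
all Hamiltonian derivations `pad_a = {a, ·}`. -/
noncomputable def PoissonDiffOps (K P : Type*) [Field K] [CommRing P] [Algebra K P]
    (b : P →ₗ[K] P →ₗ[K] P) : Subalgebra K (Module.End K P) :=
  Algebra.adjoin K
    ((Set.range fun a : P => (Algebra.lmul K P a : Module.End K P)) ∪
      (Set.range fun a : P => (b a : Module.End K P)))

section Aux

variable (K P : Type*) [Field K] [CommRing P] [Algebra K P]

/-- The order filtration of `End_K(P)` by commutators with multiplication operators. -/
noncomputable def pdFil : ℕ → Submodule K (Module.End K P)
  | 0 => LinearMap.range (Algebra.lmul K P).toLinearMap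
  | n + 1 => ⨅ p : P, Submodule.comap
      (LinearMap.mulRight K (Algebra.lmul K P p : Module.End K P) -
        LinearMap.mulLeft K (Algebra.lmul K P p : Module.End K P))
      (pdFil n)

variable {K P}

lemma mem_pdFil_succ {D : Module.End K P} {n : ℕ} :
    D ∈ pdFil K P (n + 1) ↔
      ∀ p : P, D * Algebra.lmul K P p - Algebra.lmul K P p * D ∈ pdFil K P n := by
  simp [pdFil, Submodule.mem_comap]

lemma lmul_mem_pdFil_zero (a : P) : (Algebra.lmul K P a : Module.End K P) ∈ pdFil K P 0 :=
  ⟨a, rfl⟩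

lemma comm_eq_zero_of_mem_pdFil_zero {D : Module.End K P} (hD : D ∈ pdFil K P 0) (p : P) :
    D * Algebra.lmul K P p - Algebra.lmul K P p * D = 0 := by
  obtain ⟨a, rfl⟩ := hD
  rw [AlgHom.toLinearMap_apply, ← map_mul, ← map_mul, mul_comm a p, sub_self]

lemma pdFil_le_succ : ∀ n, pdFil K P n ≤ pdFil K P (n + 1)
  | 0 => fun D hD => mem_pdFil_succ.2 fun p => by
      rw [comm_eq_zero_of_mem_pdFil_zero hD p]; exact zero_mem _
  | n + 1 => fun D hD => mem_pdFil_succ.2 fun p =>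
      pdFil_le_succ n (mem_pdFil_succ.1 hD p)

lemma pdFil_mono : Monotone (pdFil K P) :=
  monotone_nat_of_le_succ pdFil_le_succ

lemma comm_key (D E L : Module.End K P) :
    D * E * L - L * (D * E) = D * (E * L - L * E) + (D * L - L * D) * E := by
  simp only [mul_sub, sub_mul, mul_assoc]
  abel

lemma pdFil_mul :
    ∀ m n : ℕ, ∀ D ∈ pdFil K P m, ∀ E ∈ pdFil K P n, D * E ∈ pdFil K P (m + n) := by
  intro m
  induction m with
  | zero =>
    intro n
    induction n with
    | zero =>
      rintro _ ⟨a, rfl⟩ _ ⟨c, rfl⟩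
      exact ⟨a * c, by rw [AlgHom.toLinearMap_apply, map_mul]; rfl⟩
    | succ n ihn =>
      intro D hD E hE
      rw [Nat.zero_add]
      refine mem_pdFil_succ.2 fun p => ?_
      rw [comm_key]
      refine add_mem ?_ ?_
      · have h1 := ihn D hD _ (mem_pdFil_succ.1 hE p)
        rwa [Nat.zero_add] at h1
      · rw [comm_eq_zero_of_mem_pdFil_zero hD p, zero_mul]
        exact zero_mem _
  | succ m ihm =>
    intro n
    induction n with
    | zero =>
      intro D hD E hE
      rw [Nat.add_zero]
      refine mem_pdFil_succ.2 fun p => ?_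
      rw [comm_key]
      refine add_mem ?_ ?_
      · rw [comm_eq_zero_of_mem_pdFil_zero hE p, mul_zero]
        exact zero_mem _
      · have h1 := ihm 0 _ (mem_pdFil_succ.1 hD p) E hE
        rwa [Nat.add_zero] at h1
    | succ n ihn =>
      intro D hD E hE
      refine mem_pdFil_succ.2 fun p => ?_
      rw [comm_key]
      refine add_mem (ihn D hD _ (mem_pdFil_succ.1 hE p)) ?_
      have h1 := ihm (n + 1) _ (mem_pdFil_succ.1 hD p) E hE
      rwa [show m + (n + 1) = m + 1 + n by omega] at h1

variable {b : P →ₗ[K] P →ₗ[K] P}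

/-- The commutator of a Hamiltonian derivation with a multiplication operator. -/
lemma pad_comm_lmul (hb : IsPoissonBracket K b) (a p : P) :
    (b a : Module.End K P) * Algebra.lmul K P p - Algebra.lmul K P p * (b a : Module.End K P) =
      Algebra.lmul K P (b a p) := by
  ext y
  simp only [LinearMap.sub_apply, Module.End.mul_apply, Algebra.coe_lmul_eq_mul,
    LinearMap.mul_apply']
  rw [hb.2.2 a p y]
  ring

lemma lmul_mem_pd (a : P) :
    (Algebra.lmul K P a : Module.End K P) ∈ PoissonDiffOps K P b :=
  Algebra.subset_adjoin (Or.inl ⟨a, rfl⟩)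

lemma pad_mem_pd (a : P) : (b a : Module.End K P) ∈ PoissonDiffOps K P b :=
  Algebra.subset_adjoin (Or.inr ⟨a, rfl⟩)

/-- Every Poisson differential operator lies in some level of the filtration. -/
lemma exists_mem_pdFil (hb : IsPoissonBracket K b) {D : Module.End K P}
    (hD : D ∈ PoissonDiffOps K P b) : ∃ n, D ∈ pdFil K P n := by
  induction hD using Algebra.adjoin_induction with
  | mem x hx =>
    rcases hx with ⟨a, rfl⟩ | ⟨a, rfl⟩
    · exact ⟨0, lmul_mem_pdFil_zero a⟩
    · refine ⟨1, mem_pdFil_succ.2 fun p => ?_⟩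
      rw [pad_comm_lmul hb a p]
      exact lmul_mem_pdFil_zero _
  | algebraMap r =>
    exact ⟨0, ⟨algebraMap K P r, by rw [AlgHom.toLinearMap_apply, AlgHom.commutes]⟩⟩
  | add x y hx hy ihx ihy =>
    obtain ⟨m, hm⟩ := ihx
    obtain ⟨n, hn⟩ := ihy
    exact ⟨max m n, add_mem (pdFil_mono (le_max_left m n) hm)
      (pdFil_mono (le_max_right m n) hn)⟩
  | mul x y hx hy ihx ihy =>
    obtain ⟨m, hm⟩ := ihx
    obtain ⟨n, hn⟩ := ihy
    exact ⟨m + n, pdFil_mul m n x hm y hn⟩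

/-- Every Poisson differential operator preserves every Poisson ideal. -/
lemma pd_preserves (hb : IsPoissonBracket K b) {I : Ideal P}
    (hI : ∀ p x : P, x ∈ I → b p x ∈ I) {D : Module.End K P}
    (hD : D ∈ PoissonDiffOps K P b) : ∀ x ∈ I, D x ∈ I := by
  induction hD using Algebra.adjoin_induction with
  | mem D hD =>
    rcases hD with ⟨a, rfl⟩ | ⟨a, rfl⟩
    · intro x hx
      simpa only [Algebra.coe_lmul_eq_mul, LinearMap.mul_apply'] using I.mul_mem_left a hx
    · exact fun x hx => hI a x hx
  | algebraMap r =>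
    intro x hx
    rw [Module.algebraMap_end_apply, Algebra.smul_def]
    exact I.mul_mem_left _ hx
  | add D E hD hE ihD ihE =>
    intro x hx
    exact add_mem (ihD x hx) (ihE x hx)
  | mul D E hD hE ihD ihE =>
    intro x hx
    exact ihD _ (ihE x hx)

/-- From a nonzero element of a two-sided ideal of `PD(P)` lying in filtration level `n`,
extract a nonzero multiplication operator in the ideal. -/
lemma exists_lmul_mem_tsi (hb : IsPoissonBracket K b)
    (J : TwoSidedIdeal (PoissonDiffOps K P b)) :
    ∀ n : ℕ, ∀ D : PoissonDiffOps K P b, D ∈ J → D ≠ 0 →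
      (D : Module.End K P) ∈ pdFil K P n →
      ∃ x : P, x ≠ 0 ∧
        (⟨Algebra.lmul K P x, lmul_mem_pd x⟩ : PoissonDiffOps K P b) ∈ J := by
  intro n
  induction n with
  | zero =>
    intro D hDJ hD0 hfil
    obtain ⟨a, ha⟩ := hfil
    rw [AlgHom.toLinearMap_apply] at ha
    refine ⟨a, ?_, ?_⟩
    · rintro rfl
      apply hD0
      apply Subtype.ext
      rw [← ha, map_zero]
      rfl
    · have : (⟨Algebra.lmul K P a, lmul_mem_pd a⟩ : PoissonDiffOps K P b) = D :=
        Subtype.ext ha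
      rwa [this]
  | succ n ih =>
    intro D hDJ hD0 hfil
    by_cases hc : ∀ p : P,
        (D : Module.End K P) * Algebra.lmul K P p -
          Algebra.lmul K P p * (D : Module.End K P) = 0
    · -- D commutes with all multiplications, so D is multiplication by D 1
      set x : P := (D : Module.End K P) 1 with hx
      have hDx : (D : Module.End K P) = Algebra.lmul K P x := by
        ext y
        have h := congrFun (congrArg (fun f : Module.End K P => (f : P → P))
          (sub_eq_zero.1 (hc y))) 1
        simp only [Module.End.mul_apply, Algebra.coe_lmul_eq_mul, LinearMap.mul_apply',
          mul_one] at h ⊢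
        rw [h, mul_comm]
      refine ⟨x, ?_, ?_⟩
      · rintro h0
        apply hD0
        apply Subtype.ext
        rw [hDx, h0, map_zero]
        rfl
      · have : (⟨Algebra.lmul K P x, lmul_mem_pd x⟩ : PoissonDiffOps K P b) = D :=
          Subtype.ext hDx.symm
        rwa [this]
    · push_neg at hc
      obtain ⟨p, hp⟩ := hc
      set Lp : PoissonDiffOps K P b := ⟨Algebra.lmul K P p, lmul_mem_pd p⟩ with hLp
      set D' : PoissonDiffOps K P b := D * Lp - Lp * D with hD'
      have hD'val : (D' : Module.End K P) =
          (D : Module.End K P) * Algebra.lmul K P p -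
            Algebra.lmul K P p * (D : Module.End K P) := rfl
      refine ih D' ?_ ?_ ?_
      · exact J.sub_mem (J.mul_mem_right D Lp hDJ) (J.mul_mem_left Lp D hDJ)
      · intro h0
        apply hp
        rw [← hD'val, h0]
        rfl
      · rw [hD'val]
        exact mem_pdFil_succ.1 hfil p

end Aux

/-- Simplicity criterion: the algebra `PD(P)` of Poisson differential operators is a
simple ring iff the Poisson algebra `P` is Poisson simple, i.e. `0` and `P` are the
only Poisson ideals of `P`. -/
theorem poissonDiffOps_simple_iff (K P : Type*) [Field K] [CommRing P] [Nontrivial P]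
    [Algebra K P] (b : P →ₗ[K] P →ₗ[K] P) (hb : IsPoissonBracket K b) :
    IsSimpleRing (PoissonDiffOps K P b) ↔
      ∀ I : Ideal P, (∀ p x : P, x ∈ I → b p x ∈ I) → I = ⊥ ∨ I = ⊤ := by
  constructor
  · -- simple ⇒ Poisson simple
    intro hs I hI
    by_contra h
    push_neg at h
    obtain ⟨hIbot, hItop⟩ := h
    -- the two-sided ideal of operators with range in I
    let J : TwoSidedIdeal (PoissonDiffOps K P b) :=
      TwoSidedIdeal.mk' {D | ∀ p : P, (D : Module.End K P) p ∈ I}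
        (fun p => by simp)
        (fun {x y} hx hy p => by
          simpa using add_mem (hx p) (hy p))
        (fun {x} hx p => by simpa using neg_mem (hx p))
        (fun {x y} hy p => by
          have : ((x * y : PoissonDiffOps K P b) : Module.End K P) p
              = (x : Module.End K P) ((y : Module.End K P) p) := rfl
          rw [this]
          exact pd_preserves hb hI x.2 _ (hy p))
        (fun {x y} hx p => by
          have : ((x * y : PoissonDiffOps K P b) : Module.End K P) p
              = (x : Module.End K P) ((y : Module.End K P) p) := rfl
          rw [this]
          exact hx _)
    rcases hs.simple.eq_bot_or_eq_top J with hJ | hJ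
    · -- J = ⊥ contradicts I ≠ ⊥
      obtain ⟨x0, hx0I, hx0⟩ := Submodule.exists_mem_ne_zero_of_ne_bot hIbot
      have hmem : (⟨Algebra.lmul K P x0, lmul_mem_pd x0⟩ : PoissonDiffOps K P b) ∈ J := by
        rw [TwoSidedIdeal.mem_mk']
        intro p
        simpa only [Algebra.coe_lmul_eq_mul, LinearMap.mul_apply'] using I.mul_mem_right p hx0I
      rw [hJ, TwoSidedIdeal.mem_bot] at hmem
      apply hx0
      have := congrArg (fun D : PoissonDiffOps K P b => (D : Module.End K P) 1) hmem
      simpa using this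
    · -- J = ⊤ contradicts I ≠ ⊤
      have h1 : (1 : PoissonDiffOps K P b) ∈ J := hJ ▸ TwoSidedIdeal.mem_top _
      rw [TwoSidedIdeal.mem_mk'] at h1
      apply hItop
      rw [Ideal.eq_top_iff_one]
      simpa using h1 1
  · -- Poisson simple ⇒ simple
    intro hI
    have hnt : Nontrivial (PoissonDiffOps K P b) := by
      refine ⟨0, 1, fun h => ?_⟩
      have := congrArg (fun D : PoissonDiffOps K P b => (D : Module.End K P) 1) h
      simpa using this.symm
    refine IsSimpleRing.of_eq_bot_or_eq_top fun J => ?_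
    by_cases hJ : J = ⊥
    · exact Or.inl hJ
    · right
      -- get a nonzero element of J
      have : ∃ D : PoissonDiffOps K P b, D ∈ J ∧ D ≠ 0 := by
        by_contra hcon
        push_neg at hcon
        apply hJ
        refine le_antisymm (fun D hD => ?_) bot_le
        rw [TwoSidedIdeal.mem_bot]
        exact hcon D hD
      obtain ⟨D, hDJ, hD0⟩ := this
      obtain ⟨n, hn⟩ := exists_mem_pdFil hb D.2
      obtain ⟨x0, hx0, hx0J⟩ := exists_lmul_mem_tsi hb J n D hDJ hD0 hn
      -- the Poisson ideal of elements whose multiplication operator lies in J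
      let I : Ideal P :=
        { carrier := {y | (⟨Algebra.lmul K P y, lmul_mem_pd y⟩ : PoissonDiffOps K P b) ∈ J}
          zero_mem' := by
            have : (⟨Algebra.lmul K P (0 : P), lmul_mem_pd 0⟩ : PoissonDiffOps K P b) = 0 :=
              Subtype.ext (map_zero (Algebra.lmul K P))
            show _ ∈ J
            rw [this]
            exact J.zero_mem
          add_mem' := by
            intro y z hy hz
            have : (⟨Algebra.lmul K P (y + z), lmul_mem_pd (y + z)⟩ : PoissonDiffOps K P b)
                = ⟨Algebra.lmul K P y, lmul_mem_pd y⟩ + ⟨Algebra.lmul K P z, lmul_mem_pd z⟩ :=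
              Subtype.ext (map_add (Algebra.lmul K P) y z)
            show _ ∈ J
            rw [this]
            exact J.add_mem hy hz
          smul_mem' := by
            intro c y hy
            have : (⟨Algebra.lmul K P (c • y), lmul_mem_pd (c • y)⟩ : PoissonDiffOps K P b)
                = ⟨Algebra.lmul K P c, lmul_mem_pd c⟩ * ⟨Algebra.lmul K P y, lmul_mem_pd y⟩ :=
              Subtype.ext (by
                show Algebra.lmul K P (c • y) = Algebra.lmul K P c * Algebra.lmul K P y
                rw [smul_eq_mul, map_mul])
            show _ ∈ J
            rw [this]
            exact J.mul_mem_left _ _ hy }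
      have hIP : ∀ p x : P, x ∈ I → b p x ∈ I := by
        intro p x hx
        have : (⟨Algebra.lmul K P (b p x), lmul_mem_pd (b p x)⟩ : PoissonDiffOps K P b)
            = ⟨(b p : Module.End K P), pad_mem_pd p⟩ * ⟨Algebra.lmul K P x, lmul_mem_pd x⟩
              - ⟨Algebra.lmul K P x, lmul_mem_pd x⟩ * ⟨(b p : Module.End K P), pad_mem_pd p⟩ :=
          Subtype.ext ((pad_comm_lmul hb p x).symm)
        show _ ∈ J
        rw [this]
        exact J.sub_mem (J.mul_mem_left _ _ hx) (J.mul_mem_right _ _ hx)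
      rcases hI I hIP with hbot | htop
      · exfalso
        apply hx0
        have : x0 ∈ I := hx0J
        rw [hbot] at this
        exact this
      · have h1 : (1 : P) ∈ I := htop ▸ Submodule.mem_top
        have heq : (⟨Algebra.lmul K P (1 : P), lmul_mem_pd 1⟩ : PoissonDiffOps K P b)
            = 1 := Subtype.ext (map_one (Algebra.lmul K P))
        have h1' : (⟨Algebra.lmul K P (1 : P), lmul_mem_pd 1⟩ : PoissonDiffOps K P b) ∈ J := h1
        have h2 : (1 : PoissonDiffOps K P b) ∈ J := by rw [← heq]; exact h1'
        exact TwoSidedIdeal.eq_top J h2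
end
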